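/- Let d = 3, β > 0, and let f : ℝ³ → ℝ be a bounded measurable function with f ≥ 0 and compact support. Then for every ε > 0 and every φ ∈ L²(ℝ³), ∫_{ℝ³} ε |F(√f φ)(p)|² / ( β|p|² (ε + β|p|²) ) dp ≤ (ε^{1/2}/β^{3/2}) · C₃ · ‖f‖₁ ‖φ‖₂², where C₃ = (2π)^{−3} ∫_{ℝ³} dq / ( |q|² (1 + |q|²) ) < ∞. More generally, for any integer dimension d with 2 < d < 4 the same bound holds with ε^{(d−2)/2}/β^{d/2} in place of ε^{1/2}/β^{3/2} and C_d = (2π)^{−d} ∫_{ℝ^d} dq/(|q|²(1+|q|²)). -/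

import Mathlib

open MeasureTheory


lemma integrable_fun_norm_of_polar {E : Type*} [NormedAddCommGroup E] [NormedSpace ℝ E]
    [MeasurableSpace E] [BorelSpace E] [Nontrivial E] [FiniteDimensional ℝ E]
    (μ : Measure E) [μ.IsAddHaarMeasure] {g : ℝ → ℝ}
    (hg : IntegrableOn (fun y => y ^ (Module.finrank ℝ E - 1) * g y) (Set.Ioi 0)) :
    Integrable (fun x => g ‖x‖) μ := by
  have h1 : Integrable (fun r : Set.Ioi (0:ℝ) => g r)
      (Measure.volumeIoiPow (Module.finrank ℝ E - 1)) := by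
    rw [Measure.volumeIoiPow, integrable_withDensity_iff]
    · have : Integrable ((fun y : ℝ => y ^ (Module.finrank ℝ E - 1) * g y) ∘
          (Subtype.val : Set.Ioi (0:ℝ) → ℝ))
          ((volume : Measure ℝ).comap Subtype.val) := by
        rw [(MeasurableEmbedding.subtype_coe measurableSet_Ioi).integrable_map_iff.symm,
          map_comap_subtype_coe measurableSet_Ioi]
        exact hg
      refine this.congr ?_
      refine Filter.Eventually.of_forall fun r => ?_
      simp only [Function.comp_apply]
      rw [ENNReal.toReal_ofReal (pow_nonneg r.2.out.le _)]
      ring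
    · exact (measurable_subtype_coe.pow_const _).ennreal_ofReal
    · exact Filter.Eventually.of_forall fun r => ENNReal.ofReal_lt_top
  have h2 : Integrable (fun z : (Metric.sphere (0:E) 1) × Set.Ioi (0:ℝ) => g z.2)
      (μ.toSphere.prod (Measure.volumeIoiPow (Module.finrank ℝ E - 1))) := by
    have := (integrable_const (1:ℝ) (μ := μ.toSphere)).smul_prod h1
    simpa using this
  have h3 : Integrable (fun x : ({(0:E)}ᶜ : Set E) => g ‖(x:E)‖) (μ.comap Subtype.val) := by
    have := (μ.measurePreserving_homeomorphUnitSphereProd).integrable_comp_emb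
      (Homeomorph.measurableEmbedding _)
      (g := fun z : (Metric.sphere (0:E) 1) × Set.Ioi (0:ℝ) => g z.2)
    simpa [Function.comp_def] using this.mpr h2
  have h4 : Integrable (fun x : E => g ‖x‖) (μ.restrict {(0:E)}ᶜ) := by
    rw [← map_comap_subtype_coe (measurableSet_singleton (0:E)).compl,
      (MeasurableEmbedding.subtype_coe (measurableSet_singleton (0:E)).compl).integrable_map_iff]
    exact h3
  rwa [restrict_compl_singleton] at h4

/-- The Fourier transform with the convention
`(F h)(p) = (2π)^(−d/2) ∫ e^(−i p·x) h(x) dx`, defined pointwise by the integral. -/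
noncomputable def Ftrans {d : ℕ} (h : EuclideanSpace ℝ (Fin d) → ℂ)
    (p : EuclideanSpace ℝ (Fin d)) : ℂ :=
  (((2 * Real.pi) ^ (-(d : ℝ) / 2) : ℝ) : ℂ) *
    ∫ x : EuclideanSpace ℝ (Fin d),
      Complex.exp (-(Complex.I * ((inner ℝ p x : ℝ) : ℂ))) * h x

/-- For any integer dimension `2 < d < 4` (so in particular `d = 3`),
`β > 0`, `f ≥ 0` bounded measurable with compact support, `ε > 0` and `φ ∈ L²(ℝ^d)`,
`∫ ε |F(√f φ)(p)|² / (β|p|² (ε + β|p|²)) dp ≤ (ε^{(d−2)/2}/β^{d/2}) C_d ‖f‖₁ ‖φ‖₂²`,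
where `C_d = (2π)^{−d} ∫ dq/(|q|²(1+|q|²)) < ∞`. -/
theorem stmt_17 (d : ℕ) (hd2 : 2 < d) (hd4 : d < 4) (β : ℝ) (hβ : 0 < β)
    (f : EuclideanSpace ℝ (Fin d) → ℝ) (hf_meas : Measurable f)
    (hf0 : ∀ x, 0 ≤ f x) (hf_bdd : ∃ M, ∀ x, f x ≤ M) (hf_supp : HasCompactSupport f)
    (ε : ℝ) (hε : 0 < ε)
    (φ : EuclideanSpace ℝ (Fin d) → ℂ) (hφ : MemLp φ 2 volume) :
    -- the constant `C_d` is finite: the defining integrand is integrable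
    Integrable (fun q : EuclideanSpace ℝ (Fin d) =>
        (‖q‖ ^ 2 * (1 + ‖q‖ ^ 2))⁻¹) volume ∧
    -- the main estimate
    (∫ p : EuclideanSpace ℝ (Fin d),
        ε * ‖Ftrans (fun x => (Real.sqrt (f x) : ℂ) * φ x) p‖ ^ 2 /
          (β * ‖p‖ ^ 2 * (ε + β * ‖p‖ ^ 2)))
      ≤ ε ^ (((d : ℝ) - 2) / 2) / β ^ ((d : ℝ) / 2) *
          ((2 * Real.pi) ^ (-(d : ℝ)) *
            ∫ q : EuclideanSpace ℝ (Fin d), (‖q‖ ^ 2 * (1 + ‖q‖ ^ 2))⁻¹) *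
          (∫ x, f x) * ∫ x, ‖φ x‖ ^ 2 := by
  have hd3 : d = 3 := by omega
  subst hd3
  have hfr : Module.finrank ℝ (EuclideanSpace ℝ (Fin 3)) = 3 := by
    simp [finrank_euclideanSpace]
  set Gfun : EuclideanSpace ℝ (Fin 3) → ℝ :=
    fun q => (‖q‖ ^ 2 * (1 + ‖q‖ ^ 2))⁻¹ with hGfun
  -- Part 1 : integrability of the constant's integrand
  have hG : Integrable Gfun volume := by
    have : Integrable
        (fun x : EuclideanSpace ℝ (Fin 3) => (fun r : ℝ => (r ^ 2 * (1 + r ^ 2))⁻¹) ‖x‖)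
        (volume : Measure (EuclideanSpace ℝ (Fin 3))) := by
      refine integrable_fun_norm_of_polar (g := fun r : ℝ => (r ^ 2 * (1 + r ^ 2))⁻¹)
        (volume : Measure (EuclideanSpace ℝ (Fin 3))) ?_
      rw [hfr]
      have h0 : IntegrableOn (fun y : ℝ => (1 + y ^ 2)⁻¹) (Set.Ioi 0) volume :=
        (integrable_inv_one_add_sq).integrableOn
      refine h0.congr ?_
      filter_upwards [ae_restrict_mem measurableSet_Ioi] with y hy
      have hy0 : y ≠ 0 := ne_of_gt hy
      have h1y : (1 : ℝ) + y ^ 2 ≠ 0 := by positivity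
      field_simp
    exact this
  refine ⟨hG, ?_⟩
  -- notation
  set A := ∫ x, f x with hA
  set B := ∫ x : EuclideanSpace ℝ (Fin 3), ‖φ x‖ ^ 2 with hB
  have hA0 : 0 ≤ A := integral_nonneg hf0
  have hB0 : 0 ≤ B := integral_nonneg fun x => sq_nonneg _
  obtain ⟨M, hM⟩ := hf_bdd
  -- f is integrable
  have hf_int : Integrable f volume := by
    rw [← integrableOn_iff_integrable_of_support_subset (subset_tsupport f)]
    exact Measure.integrableOn_of_bounded hf_supp.isCompact.measure_lt_top.ne
      hf_meas.aestronglyMeasurable (ae_of_all _ fun x => by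
        rw [Real.norm_of_nonneg (hf0 x)]; exact hM x)
  -- √f ∈ L²
  have hsq : MemLp (fun x => Real.sqrt (f x)) 2 volume := by
    rw [memLp_two_iff_integrable_sq (hf_meas.sqrt).aestronglyMeasurable]
    refine hf_int.congr (ae_of_all _ fun x => ?_)
    exact (Real.sq_sqrt (hf0 x)).symm
  -- Cauchy–Schwarz
  have hpq : Real.HolderConjugate 2 2 := by constructor <;> norm_num
  have h2 : (ENNReal.ofReal 2) = 2 := by norm_num
  have hCS : ∫ x, Real.sqrt (f x) * ‖φ x‖ ≤ A ^ (1/2 : ℝ) * B ^ (1/2 : ℝ) := by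
    have key := integral_mul_le_Lp_mul_Lq_of_nonneg hpq
      (ae_of_all _ fun x => Real.sqrt_nonneg (f x))
      (ae_of_all _ fun x => norm_nonneg (φ x))
      (by rw [h2]; exact hsq) (by rw [h2]; exact hφ.norm)
    have e1 : ∫ x, Real.sqrt (f x) ^ (2:ℝ) = A := by
      refine integral_congr_ae (ae_of_all _ fun x => ?_) |>.trans rfl
      rw [show ((2:ℝ) = ((2:ℕ):ℝ)) by norm_num, Real.rpow_natCast, Real.sq_sqrt (hf0 x)]
    have e2 : ∫ x : EuclideanSpace ℝ (Fin 3), ‖φ x‖ ^ (2:ℝ) = B := by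
      refine integral_congr_ae (ae_of_all _ fun x => ?_) |>.trans rfl
      rw [show ((2:ℝ) = ((2:ℕ):ℝ)) by norm_num, Real.rpow_natCast]
    rw [e1, e2] at key
    exact key
  -- the sup bound on the Fourier transform
  set cst : ℝ := (2 * Real.pi) ^ (-((3:ℕ) : ℝ) / 2) with hcst
  have hcst0 : 0 ≤ cst := Real.rpow_nonneg (by positivity) _
  set K : ℝ := cst * (A ^ (1/2:ℝ) * B ^ (1/2:ℝ)) with hK
  have hK0 : 0 ≤ K := mul_nonneg hcst0
    (mul_nonneg (Real.rpow_nonneg hA0 _) (Real.rpow_nonneg hB0 _))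
  have hFb : ∀ p, ‖Ftrans (fun x => (Real.sqrt (f x) : ℂ) * φ x) p‖ ≤ K := by
    intro p
    rw [Ftrans, norm_mul, Complex.norm_real, Real.norm_of_nonneg hcst0]
    refine le_trans (mul_le_mul_of_nonneg_left ?_ hcst0)
      (mul_le_mul_of_nonneg_left hCS hcst0)
    refine (norm_integral_le_integral_norm _).trans_eq ?_
    have hexp : ∀ x : EuclideanSpace ℝ (Fin 3),
        ‖Complex.exp (-(Complex.I * ((inner ℝ p x : ℝ):ℂ)))‖ = 1 := fun x => by
      rw [Complex.norm_exp]
      simp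
    refine integral_congr_ae (ae_of_all _ fun x => ?_)
    simp only [norm_mul, hexp x, one_mul, Complex.norm_real, Real.norm_eq_abs,
      abs_of_nonneg (Real.sqrt_nonneg (f x))]
  have hK2 : K ^ 2 = (2 * Real.pi) ^ (-((3:ℕ) : ℝ)) * A * B := by
    have sqr : ∀ x : ℝ, 0 ≤ x → ∀ e : ℝ, (x ^ e) ^ (2:ℕ) = x ^ (e * 2) := fun x hx e => by
      rw [← Real.rpow_natCast (x ^ e) 2, ← Real.rpow_mul hx]
      norm_num
    rw [hK, hcst, mul_pow, mul_pow, sqr _ (by positivity) _, sqr _ hA0 _, sqr _ hB0 _]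
    norm_num [Real.rpow_one]
    ring
  -- change of variables set-up
  set c : ℝ := Real.sqrt (ε / β) with hc
  have hc0 : 0 < c := Real.sqrt_pos.2 (div_pos hε hβ)
  have hc2 : c ^ 2 = ε / β := Real.sq_sqrt (div_pos hε hβ).le
  have h_scale : ∀ p : EuclideanSpace ℝ (Fin 3),
      ε⁻¹ * Gfun (c⁻¹ • p) = ε / (β * ‖p‖ ^ 2 * (ε + β * ‖p‖ ^ 2)) := by
    intro p
    have hnp : ‖c⁻¹ • p‖ ^ 2 = (β / ε) * ‖p‖ ^ 2 := by
      rw [norm_smul, mul_pow, norm_inv, Real.norm_of_nonneg hc0.le, inv_pow, hc2]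
      rw [inv_div]
    rw [hGfun]
    simp only
    rw [hnp]
    rcases eq_or_ne (‖p‖ ^ 2) 0 with h0 | h0
    · rw [h0]
      simp
    · have hp2 : 0 < ‖p‖ ^ 2 := lt_of_le_of_ne (sq_nonneg _) (Ne.symm h0)
      have hden : ε + β * ‖p‖ ^ 2 ≠ 0 := by positivity
      field_simp
  have h_int : Integrable
      (fun p : EuclideanSpace ℝ (Fin 3) => K ^ 2 * (ε⁻¹ * Gfun (c⁻¹ • p))) volume :=
    ((hG.comp_smul (inv_ne_zero hc0.ne')).const_mul _).const_mul _
  have hmain : (∫ p : EuclideanSpace ℝ (Fin 3),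
        ε * ‖Ftrans (fun x => (Real.sqrt (f x) : ℂ) * φ x) p‖ ^ 2 /
          (β * ‖p‖ ^ 2 * (ε + β * ‖p‖ ^ 2)))
      ≤ ∫ p : EuclideanSpace ℝ (Fin 3), K ^ 2 * (ε⁻¹ * Gfun (c⁻¹ • p)) := by
    refine integral_mono_of_nonneg (ae_of_all _ fun p => ?_) h_int (ae_of_all _ fun p => ?_)
    · exact div_nonneg (mul_nonneg hε.le (sq_nonneg _)) (by positivity)
    · show ε * ‖Ftrans (fun x => (Real.sqrt (f x) : ℂ) * φ x) p‖ ^ 2 /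
          (β * ‖p‖ ^ 2 * (ε + β * ‖p‖ ^ 2)) ≤ K ^ 2 * (ε⁻¹ * Gfun (c⁻¹ • p))
      rw [h_scale p, mul_div_assoc']
      rcases eq_or_ne (‖p‖ ^ 2) 0 with h0 | h0
      · rw [h0]
        simp
      · have hp2 : 0 < ‖p‖ ^ 2 := lt_of_le_of_ne (sq_nonneg _) (Ne.symm h0)
        have hD : 0 < β * ‖p‖ ^ 2 * (ε + β * ‖p‖ ^ 2) := by positivity
        refine div_le_div_of_nonneg_right ?_ hD.le
        have h2' : ‖Ftrans (fun x => (Real.sqrt (f x) : ℂ) * φ x) p‖ ^ 2 ≤ K ^ 2 :=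
          pow_le_pow_left₀ (norm_nonneg _) (hFb p) 2
        calc ε * ‖Ftrans (fun x => (Real.sqrt (f x) : ℂ) * φ x) p‖ ^ 2
            ≤ ε * K ^ 2 := mul_le_mul_of_nonneg_left h2' hε.le
          _ = K ^ 2 * ε := mul_comm _ _
  refine hmain.trans ?_
  -- evaluate the comparison integral
  have hval : (∫ p : EuclideanSpace ℝ (Fin 3), K ^ 2 * (ε⁻¹ * Gfun (c⁻¹ • p)))
      = K ^ 2 * ε⁻¹ * (c ^ 3 * ∫ q, Gfun q) := by
    rw [integral_const_mul, integral_const_mul, ← mul_assoc]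
    congr 1
    have := Measure.integral_comp_inv_smul_of_nonneg
      (volume : Measure (EuclideanSpace ℝ (Fin 3))) Gfun hc0.le
    rw [this, hfr, smul_eq_mul]
  rw [hval]
  -- final algebraic identities
  have hc3 : c ^ 3 = ε ^ ((3:ℝ)/2) / β ^ ((3:ℝ)/2) := by
    have : c = (ε / β) ^ ((1:ℝ)/2) := by
      rw [hc, Real.sqrt_eq_rpow]
    rw [this, ← Real.rpow_natCast ((ε/β) ^ ((1:ℝ)/2)) 3,
      ← Real.rpow_mul (div_pos hε hβ).le,
      Real.div_rpow hε.le hβ.le]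
    norm_num
  have hεc : ε⁻¹ * ε ^ ((3:ℝ)/2) = ε ^ ((1:ℝ)/2) := by
    rw [← Real.rpow_neg_one ε, ← Real.rpow_add hε]
    norm_num
  rw [hK2, hc3]
  have hcast : ((3:ℕ) : ℝ) = (3:ℝ) := by norm_num
  rw [hcast]
  have e1 : ((3:ℝ) - 2)/2 = (1:ℝ)/2 := by norm_num
  rw [e1]
  rw [show (2 * Real.pi) ^ (-(3:ℝ)) * A * B * ε⁻¹ *
      (ε ^ ((3:ℝ)/2) / β ^ ((3:ℝ)/2) * ∫ q, Gfun q)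
      = (ε⁻¹ * ε ^ ((3:ℝ)/2)) / β ^ ((3:ℝ)/2) *
        ((2 * Real.pi) ^ (-(3:ℝ)) * ∫ q, Gfun q) * A * B from by ring, hεc]
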